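/- Let (B₁, φ̃₁) and (B₂, φ̃₂) be noncommutative probability spaces over ℂ, let P ∈ B₁ be an idempotent separating φ̃₁ and Q ∈ B₂ an idempotent separating φ̃₂, let 𝒜₁ ⊆ B₁, 𝒜₂ ⊆ B₂ be (not necessarily unital) subalgebras, and put P^⊥ = 1 − P and φ = φ̃₁ ⊗ φ̃₂ on B₁ ⊗[ℂ] B₂. Consider the non-unital subalgebras 𝒜₁' = {a ⊗ Q : a ∈ 𝒜₁} and 𝒜₂' = {P^⊥ ⊗ b : b ∈ 𝒜₂}. Then 𝒜₂' is orthogonal to 𝒜₁' with respect to (φ, σ), where σ(P^⊥ ⊗ b) = φ̃₂(b): that is, (i) for every n ≥ 1, all x₁, …, xₙ ∈ 𝒜₁' ∪ 𝒜₂' and every index 1 < i < n with xᵢ = P^⊥ ⊗ b ∈ 𝒜₂' and x_{i−1}, x_{i+1} ∈ 𝒜₁', one has φ(x₁⋯xₙ) = φ̃₂(b)·( φ(x₁⋯x_{i−1} x_{i+1}⋯xₙ) − φ(x₁⋯x_{i−1})·φ(x_{i+1}⋯xₙ) ); and (ii) φ(x₁⋯xₙ) = 0 whenever x₁ ∈ 𝒜₂'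 or xₙ ∈ 𝒜₂'. -/
import Mathlib


open scoped TensorProduct

private lemma tmul_list_prod {B₁ B₂ : Type*} [Ring B₁] [Algebra ℂ B₁] [Ring B₂] [Algebra ℂ B₂]
    (l : List (B₁ × B₂)) :
    (l.map (fun p => p.1 ⊗ₜ[ℂ] p.2)).prod
      = (l.map Prod.fst).prod ⊗ₜ[ℂ] (l.map Prod.snd).prod := by
  induction l with
  | nil => simp [Algebra.TensorProduct.one_def]
  | cons hd tl ih => simp [ih, Algebra.TensorProduct.tmul_mul_tmul]

/-- `{P^⊥ ⊗ b}` is orthogonal to `{a ⊗ Q}` with respect to the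
pair `(φ, σ)`, where `φ = φ̃₁ ⊗ φ̃₂` and `σ(P^⊥ ⊗ b) = φ̃₂(b)`. -/
theorem orthogonal_independence_tensor_realization
    {B₁ B₂ : Type*} [Ring B₁] [Algebra ℂ B₁] [Ring B₂] [Algebra ℂ B₂]
    (φ₁ : B₁ →ₗ[ℂ] ℂ) (φ₂ : B₂ →ₗ[ℂ] ℂ)
    (hφ₁1 : φ₁ 1 = 1) (hφ₂1 : φ₂ 1 = 1)
    (P : B₁) (Q : B₂)
    (hPidem : P * P = P) (hP1 : φ₁ P = 1)
    (hPsep : ∀ x y : B₁, φ₁ (x * P * y) = φ₁ x * φ₁ y)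
    (hQidem : Q * Q = Q) (hQ1 : φ₂ Q = 1)
    (hQsep : ∀ x y : B₂, φ₂ (x * Q * y) = φ₂ x * φ₂ y)
    (𝒜₁ : NonUnitalSubalgebra ℂ B₁) (𝒜₂ : NonUnitalSubalgebra ℂ B₂)
    (φ : (B₁ ⊗[ℂ] B₂) →ₗ[ℂ] ℂ)
    (hφ : ∀ (x : B₁) (y : B₂), φ (x ⊗ₜ[ℂ] y) = φ₁ x * φ₂ y)
    (S₁ S₂ : Set (B₁ ⊗[ℂ] B₂))
    (hS₁ : S₁ = {z : B₁ ⊗[ℂ] B₂ | ∃ a ∈ 𝒜₁, z = a ⊗ₜ[ℂ] Q})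
    (hS₂ : S₂ = {z : B₁ ⊗[ℂ] B₂ | ∃ b ∈ 𝒜₂, z = (1 - P) ⊗ₜ[ℂ] b}) :
    -- (i)
    (∀ (n : ℕ) (x : Fin n → B₁ ⊗[ℂ] B₂), 1 ≤ n →
      (∀ k, x k ∈ S₁ ∪ S₂) →
      ∀ (i : Fin n) (b : B₂), b ∈ 𝒜₂ → x i = (1 - P) ⊗ₜ[ℂ] b →
        0 < (i : ℕ) → (i : ℕ) + 1 < n →
        (∀ j : Fin n, ((j : ℕ) + 1 = (i : ℕ) ∨ (j : ℕ) = (i : ℕ) + 1) → x j ∈ S₁) →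
        φ (List.ofFn x).prod =
          φ₂ b * (φ (((List.ofFn x).eraseIdx (i : ℕ)).prod)
            - φ (((List.ofFn x).take (i : ℕ)).prod)
              * φ (((List.ofFn x).drop ((i : ℕ) + 1)).prod)))
    ∧
    -- (ii)
    (∀ (n : ℕ) (x : Fin n → B₁ ⊗[ℂ] B₂) (hn : 1 ≤ n),
      (∀ k, x k ∈ S₁ ∪ S₂) →
      (x ⟨0, hn⟩ ∈ S₂ ∨ x ⟨n - 1, Nat.sub_lt hn one_pos⟩ ∈ S₂) →
      φ (List.ofFn x).prod = 0) := by
  have hPleft : ∀ z : B₁, φ₁ ((1 - P) * z) = 0 := by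
    intro z
    have h := hPsep 1 z
    rw [one_mul] at h
    rw [sub_mul, one_mul, map_sub, h, hφ₁1, one_mul, sub_self]
  have hPright : ∀ z : B₁, φ₁ (z * (1 - P)) = 0 := by
    intro z
    have h := hPsep z 1
    rw [mul_one] at h
    rw [mul_sub, mul_one, map_sub, h, hφ₁1, mul_one, sub_self]
  have main : ∀ m : List (B₁ × B₂),
      φ ((m.map (fun p => p.1 ⊗ₜ[ℂ] p.2)).prod)
        = φ₁ ((m.map Prod.fst).prod) * φ₂ ((m.map Prod.snd).prod) := by
    intro m; rw [tmul_list_prod, hφ]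
  constructor
  · -- part (i)
    intro n x hn hk i b hb hxi hi0 hi1 hnbr
    have hdec : ∀ k : Fin n, ∃ pr : B₁ × B₂,
        x k = pr.1 ⊗ₜ[ℂ] pr.2 ∧ (x k ∈ S₁ → pr.2 = Q) := by
      intro k
      by_cases h1 : x k ∈ S₁
      · rw [hS₁] at h1
        obtain ⟨a, -, ha⟩ := h1
        exact ⟨(a, Q), ha, fun _ => rfl⟩
      · rcases hk k with h | h
        · exact absurd h h1
        · rw [hS₂] at h
          obtain ⟨b', -, hb'⟩ := h
          exact ⟨(1 - P, b'), hb', fun hm => absurd hm h1⟩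
    choose pr hpr hprQ using hdec
    classical
    set c : Fin n → B₁ := fun k => if k = i then 1 - P else (pr k).1 with hc
    set d : Fin n → B₂ := fun k => if k = i then b else (pr k).2 with hd
    have hx : ∀ k, x k = c k ⊗ₜ[ℂ] d k := by
      intro k
      by_cases h : k = i
      · subst h; simp [hc, hd, hxi]
      · simp [hc, hd, h, hpr k]
    set ii : ℕ := (i : ℕ) with hiidef
    have hii : ii < n := i.isLt
    -- neighbors
    have hdm : d ⟨ii - 1, by omega⟩ = Q := by
      have hne : (⟨ii - 1, by omega⟩ : Fin n) ≠ i := by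
        simp only [ne_eq, Fin.ext_iff]; omega
      have := hprQ _ (hnbr ⟨ii - 1, by omega⟩ (Or.inl (by simp; omega)))
      simp [hd, hne, this]
    have hdp : d ⟨ii + 1, hi1⟩ = Q := by
      have hne : (⟨ii + 1, hi1⟩ : Fin n) ≠ i := by
        simp only [ne_eq, Fin.ext_iff]; omega
      have := hprQ _ (hnbr ⟨ii + 1, hi1⟩ (Or.inr (by simp)))
      simp [hd, hne, this]
    have hci : c i = 1 - P := by simp [hc]
    have hdi : d i = b := by simp [hd]
    -- lists
    set l : List (B₁ × B₂) := List.ofFn (fun k => (c k, d k)) with hl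
    have h_all : List.ofFn x = l.map (fun p => p.1 ⊗ₜ[ℂ] p.2) := by
      rw [hl, List.map_ofFn]
      exact congrArg List.ofFn (funext hx)
    have hCf : l.map Prod.fst = List.ofFn c := by rw [hl, List.map_ofFn]; rfl
    have hDf : l.map Prod.snd = List.ofFn d := by rw [hl, List.map_ofFn]; rfl
    set C : List B₁ := List.ofFn c with hC
    set D : List B₂ := List.ofFn d with hD
    have hlenC : C.length = n := by simp [hC]
    have hlenD : D.length = n := by simp [hD]
    rw [h_all, List.eraseIdx_eq_take_drop_succ, ← List.map_take, ← List.map_drop,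
      ← List.map_append, main, main, main, main]
    simp only [List.map_append, List.map_take, List.map_drop, hCf, hDf, List.prod_append]
    -- structural facts
    set L : B₁ := (C.take ii).prod with hL
    set R : B₁ := (C.drop (ii + 1)).prod with hR
    set U : B₂ := (D.take (ii - 1)).prod with hU
    set V : B₂ := (D.drop (ii + 2)).prod with hV
    have hCdrop : C.drop ii = (1 - P) :: C.drop (ii + 1) := by
      rw [List.drop_eq_getElem_cons (by omega)]
      congr 1
      simp only [hC, List.getElem_ofFn]
      exact (congrArg c (Fin.ext rfl)).trans hci
    have hCp : C.prod = L * ((1 - P) * R) := by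
      rw [← List.prod_take_mul_prod_drop C ii, hCdrop, List.prod_cons]
    have hDdrop1 : D.drop (ii + 1) = Q :: D.drop (ii + 2) := by
      rw [List.drop_eq_getElem_cons (by omega)]
      congr 1
      simp only [hD, List.getElem_ofFn]
      exact (congrArg d (Fin.ext rfl)).trans hdp
    have hDdrop0 : D.drop ii = b :: (Q :: D.drop (ii + 2)) := by
      rw [List.drop_eq_getElem_cons (by omega), ← hDdrop1]
      congr 1
      simp only [hD, List.getElem_ofFn]
      exact (congrArg d (Fin.ext rfl)).trans hdi
    have hDtake : (D.take ii).prod = U * Q := by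
      obtain ⟨j, hj⟩ : ∃ j, ii = j + 1 := ⟨ii - 1, by omega⟩
      have hjlen : j < D.length := by omega
      rw [hj, List.take_succ, List.getElem?_eq_getElem hjlen, List.prod_append]
      have : D[j] = Q := by
        simp only [hD, List.getElem_ofFn]
        exact (congrArg d (Fin.ext (show j = ii - 1 by omega))).trans hdm
      rw [this]
      simp [hU, hj]
    have hDp : D.prod = (U * Q) * (b * (Q * V)) := by
      rw [← List.prod_take_mul_prod_drop D ii, hDtake, hDdrop0, List.prod_cons,
        List.prod_cons]
    have hDd1 : (D.drop (ii + 1)).prod = Q * V := by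
      rw [hDdrop1, List.prod_cons]
    rw [hCp, hDp, hDtake, hDd1]
    have g1 : φ₁ (L * ((1 - P) * R)) = φ₁ (L * R) - φ₁ L * φ₁ R := by
      rw [sub_mul, one_mul, mul_sub, ← mul_assoc, map_sub, hPsep]
    have g2 : φ₂ (U * Q * (b * (Q * V))) = φ₂ U * (φ₂ b * φ₂ V) := by
      rw [hQsep, ← mul_assoc, hQsep]
    have g3 : φ₂ (U * Q * (Q * V)) = φ₂ U * φ₂ V := by
      rw [hQsep]
      have : φ₂ (Q * V) = φ₂ V := by
        have h := hQsep 1 V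
        rw [one_mul] at h
        rw [h, hφ₂1, one_mul]
      rw [this]
    have g4 : φ₂ (U * Q) = φ₂ U := by
      have h := hQsep U 1
      rw [mul_one] at h
      rw [h, hφ₂1, mul_one]
    have g5 : φ₂ (Q * V) = φ₂ V := by
      have h := hQsep 1 V
      rw [one_mul] at h
      rw [h, hφ₂1, one_mul]
    rw [g1, g2, g3, g4, g5]
    ring
  · -- part (ii)
    intro n x hn hk hend
    have hdec : ∀ k : Fin n, ∃ pr : B₁ × B₂,
        x k = pr.1 ⊗ₜ[ℂ] pr.2 ∧ (x k ∈ S₂ → pr.1 = 1 - P) := by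
      intro k
      by_cases h2 : x k ∈ S₂
      · rw [hS₂] at h2
        obtain ⟨b', -, hb'⟩ := h2
        exact ⟨(1 - P, b'), hb', fun _ => rfl⟩
      · rcases hk k with h | h
        · rw [hS₁] at h
          obtain ⟨a, -, ha⟩ := h
          exact ⟨(a, Q), ha, fun hm => absurd hm h2⟩
        · exact absurd h h2
    choose pr hpr hprP using hdec
    obtain ⟨m, rfl⟩ : ∃ m, n = m + 1 := ⟨n - 1, by omega⟩
    set l : List (B₁ × B₂) := List.ofFn pr with hl
    have h_all : List.ofFn x = l.map (fun p => p.1 ⊗ₜ[ℂ] p.2) := by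
      rw [hl, List.map_ofFn]
      exact congrArg List.ofFn (funext hpr)
    rw [h_all, main]
    have hfst : l.map Prod.fst = List.ofFn (fun k => (pr k).1) := by
      rw [hl, List.map_ofFn]; rfl
    rcases hend with h | h
    · have h0 : (pr ⟨0, hn⟩).1 = 1 - P := hprP _ h
      have h00 : (pr (0 : Fin (m + 1))).1 = 1 - P := by
        have e : (0 : Fin (m + 1)) = ⟨0, hn⟩ := Fin.ext (by simp)
        rw [e]; exact h0
      simp only [hfst, List.ofFn_succ, List.prod_cons, h00, hPleft, zero_mul]
    · have hlast : (pr ⟨m + 1 - 1, Nat.sub_lt hn one_pos⟩).1 = 1 - P := hprP _ h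
      have hl0 : (pr (Fin.last m)).1 = 1 - P := by
        have e : (Fin.last m) = ⟨m + 1 - 1, Nat.sub_lt hn one_pos⟩ := Fin.ext (by simp)
        rw [e]; exact hlast
      simp only [hfst, List.ofFn_succ', List.prod_concat, hl0, hPright, zero_mul]
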